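/- Suppose the entries $X_{i,j}^N$ for $1 \le j \le i \le N$ are i.i.d. random variables, whose common distribution does not depend on $N$, has finite moments of all orders, and has mean $\mu \ne 0$. Then for every $n \ge 2$, $E\big[\mathrm{tr}\big((N\, X_N^* X_N)^n\big)\big] \to \infty$ as $N \to \infty$, where $\mathrm{tr} = \frac{1}{N}\mathrm{Tr}$ is the normalized trace. -/

import Mathlib

open MeasureTheory ProbabilityTheory Filter Matrix

noncomputable section

/-- Lebesgue measure restricted to the unit interval `[0,1]`. -/
def μ01 : Measure ℝ := volume.restrict (Set.Icc (0:ℝ) 1)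

instance : IsFiniteMeasure μ01 :=
  ⟨by
    simp only [μ01, Measure.restrict_apply_univ]
    simp [Real.volume_Icc]⟩

/-- The function `e_i^N = √N · 𝟙_{[i/N,(i+1)/N]}` as an element of `L²[0,1]`
(here `i : Fin N` runs over `0, …, N-1`, corresponding to `1, …, N` in the paper). -/
def eN (N : ℕ) (i : Fin N) : Lp ℂ 2 μ01 :=
  indicatorConstLp 2 (measurableSet_Icc :
      MeasurableSet (Set.Icc ((i : ℝ) / N) (((i : ℝ) + 1) / N)))
    (measure_ne_top μ01 _) ((Real.sqrt N : ℝ) : ℂ)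

/-- The isometry `W_N : ℂ^N → L²[0,1]`, `(a_1,…,a_N) ↦ ∑ a_i e_i^N`. -/
def Wmap (N : ℕ) (a : EuclideanSpace ℂ (Fin N)) : Lp ℂ 2 μ01 :=
  ∑ i : Fin N, a i • eN N i

/-- The adjoint `W_N^* : L²[0,1] → ℂ^N`, `f ↦ (⟨f,e_1^N⟩, …, ⟨f,e_N^N⟩)`
(recall that Mathlib's inner product is conjugate-linear in the *first* slot,
so the paper's `⟨f, e⟩` is `inner e f`). -/
def Wstar (N : ℕ) (f : Lp ℂ 2 μ01) : EuclideanSpace ℂ (Fin N) :=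
  (WithLp.equiv 2 (Fin N → ℂ)).symm fun i => @inner ℂ _ _ (eN N i) f

/-- The deterministic lower-triangular matrix `T_N` whose entries on and below
the diagonal all equal `1/N`. -/
def TM (N : ℕ) : Matrix (Fin N) (Fin N) ℂ :=
  Matrix.of fun i j => if j ≤ i then ((N : ℂ))⁻¹ else 0

/-- Real-valued version of `T_N`. -/
def TMr (N : ℕ) : Matrix (Fin N) (Fin N) ℝ :=
  Matrix.of fun i j => if j ≤ i then ((N : ℝ))⁻¹ else 0

/-- The random matrix `X_N(ω) = (1/N)(X_{i,j}(ω))_{i,j}` (complex-valued version;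
the hypothesis that the entries above the diagonal vanish is imposed separately). -/
def XM {Ω : Type*} (N : ℕ) (X : Fin N → Fin N → Ω → ℝ) (ω : Ω) :
    Matrix (Fin N) (Fin N) ℂ :=
  Matrix.of fun i j => ((N : ℂ))⁻¹ * (X i j ω : ℂ)

/-- The random matrix `X_N(ω) = (1/N)(X_{i,j}(ω))_{i,j}` (real-valued version). -/
def XMr {Ω : Type*} (N : ℕ) (X : Fin N → Fin N → Ω → ℝ) (ω : Ω) :
    Matrix (Fin N) (Fin N) ℝ :=
  Matrix.of fun i j => ((N : ℝ))⁻¹ * X i j ω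

/-- A matrix acting as an operator on `ℂ^N` (with its euclidean structure). -/
def matVec {N : ℕ} (M : Matrix (Fin N) (Fin N) ℂ) (u : EuclideanSpace ℂ (Fin N)) :
    EuclideanSpace ℂ (Fin N) :=
  Matrix.toEuclideanLin M u

/-- The index set of the (closed) lower triangle of an `N × N` matrix. -/
def LTri (N : ℕ) : Type := {p : Fin N × Fin N // p.2 ≤ p.1}

/-- `V : L²[0,1] → L²[0,1]` is the Volterra operator: `V(f)(x) = ∫_0^x f(t) dt`. -/
def IsVolterra (V : Lp ℂ 2 μ01 → Lp ℂ 2 μ01) : Prop :=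
  ∀ f : Lp ℂ 2 μ01, ∀ᵐ x ∂μ01, (V f : ℝ → ℂ) x = ∫ t in (0:ℝ)..x, (f : ℝ → ℂ) t

section detAux
variable {N : ℕ}

lemma symm_dot {M : Matrix (Fin N) (Fin N) ℝ} (hM : M.IsHermitian) (u v : Fin N → ℝ) :
    u ⬝ᵥ M *ᵥ v = v ⬝ᵥ M *ᵥ u := by
  have hMt : Mᵀ = M := by
    rw [← Matrix.conjTranspose_eq_transpose_of_trivial]; exact hM
  rw [Matrix.dotProduct_mulVec, ← Matrix.mulVec_transpose, hMt, dotProduct_comm]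

lemma psd_dot_nonneg {M : Matrix (Fin N) (Fin N) ℝ} (hM : M.PosSemidef) (u : Fin N → ℝ) :
    0 ≤ u ⬝ᵥ M *ᵥ u := by
  simpa using hM.dotProduct_mulVec_nonneg u

lemma psd_cs {M : Matrix (Fin N) (Fin N) ℝ} (hM : M.PosSemidef) (u v : Fin N → ℝ) :
    (u ⬝ᵥ M *ᵥ v) ^ 2 ≤ (u ⬝ᵥ M *ᵥ u) * (v ⬝ᵥ M *ᵥ v) := by
  have h : ∀ t : ℝ, 0 ≤ (v ⬝ᵥ M *ᵥ v) * (t * t) + (2 * (u ⬝ᵥ M *ᵥ v)) * t + (u ⬝ᵥ M *ᵥ u) := by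
    intro t
    have h0 := psd_dot_nonneg hM (t • v + u)
    have hvu : v ⬝ᵥ M *ᵥ u = u ⬝ᵥ M *ᵥ v := symm_dot hM.1 v u
    simp only [Matrix.mulVec_add, Matrix.mulVec_smul, dotProduct_add, add_dotProduct,
      dotProduct_smul, smul_dotProduct, smul_eq_mul, hvu] at h0
    nlinarith [h0]
  have hd := discrim_le_zero h
  rw [discrim] at hd
  nlinarith [hd]

lemma dot_single {M : Matrix (Fin N) (Fin N) ℝ} (i j : Fin N) :
    (Pi.single i 1 : Fin N → ℝ) ⬝ᵥ M *ᵥ (Pi.single j 1) = M i j := by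
  simp [dotProduct, Matrix.mulVec, Pi.single_apply, Finset.sum_ite_eq', mul_ite]

lemma psd_sum_le {M : Matrix (Fin N) (Fin N) ℝ} (hM : M.PosSemidef) :
    (fun _ => (1:ℝ)) ⬝ᵥ M *ᵥ (fun _ => (1:ℝ)) ≤ (N : ℝ) * M.trace := by
  have hdiag : ∀ i, 0 ≤ M i i := fun i => by
    simpa [dot_single] using psd_dot_nonneg hM (Pi.single i 1)
  have hent : ∀ i j, M i j ≤ Real.sqrt (M i i) * Real.sqrt (M j j) := by
    intro i j
    have h := psd_cs hM (Pi.single i 1) (Pi.single j 1)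
    simp only [dot_single] at h
    have hs : 0 ≤ Real.sqrt (M i i) * Real.sqrt (M j j) :=
      mul_nonneg (Real.sqrt_nonneg _) (Real.sqrt_nonneg _)
    nlinarith [Real.sq_sqrt (hdiag i), Real.sq_sqrt (hdiag j), hs, h]
  have h1 : (fun _ => (1:ℝ)) ⬝ᵥ M *ᵥ (fun _ => (1:ℝ)) = ∑ i, ∑ j, M i j := by
    simp [dotProduct, Matrix.mulVec]
  have h2 : ∑ i, ∑ j, M i j ≤ (∑ i, Real.sqrt (M i i)) ^ 2 := by
    rw [sq, Finset.sum_mul_sum]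
    exact Finset.sum_le_sum fun i _ => Finset.sum_le_sum fun j _ => hent i j
  have h3 : (∑ i, Real.sqrt (M i i)) ^ 2 ≤ (N : ℝ) * ∑ i, M i i := by
    have := Finset.sum_mul_sq_le_sq_mul_sq Finset.univ (fun _ => (1:ℝ))
      (fun i => Real.sqrt (M i i))
    simp only [one_mul, one_pow, Finset.sum_const, Finset.card_univ, Fintype.card_fin,
      nsmul_eq_mul, mul_one] at this
    calc (∑ i, Real.sqrt (M i i)) ^ 2 ≤ (N:ℝ) * ∑ i, Real.sqrt (M i i) ^ 2 := this
      _ = (N : ℝ) * ∑ i, M i i := by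
          congr 1
          exact Finset.sum_congr rfl fun i _ => Real.sq_sqrt (hdiag i)
  rw [h1, Matrix.trace]
  calc ∑ i, ∑ j, M i j ≤ _ := h2
    _ ≤ _ := h3
lemma mulVec_dot_symm {A : Matrix (Fin N) (Fin N) ℝ} (hA : Aᵀ = A) (u z : Fin N → ℝ) :
    (A *ᵥ u) ⬝ᵥ z = u ⬝ᵥ (A *ᵥ z) := by
  rw [dotProduct_comm, Matrix.dotProduct_mulVec, dotProduct_comm, ← Matrix.mulVec_transpose, hA]

lemma key_pow (hN : 0 < N) {M : Matrix (Fin N) (Fin N) ℝ} (hM : M.PosSemidef) :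
    ∀ k : ℕ, 1 ≤ k →
      ((fun _ => (1:ℝ)) ⬝ᵥ M *ᵥ (fun _ => (1:ℝ))) ^ k * (N:ℝ) ≤
        (N:ℝ) ^ k * ((fun _ => (1:ℝ)) ⬝ᵥ (M ^ k) *ᵥ (fun _ => (1:ℝ))) := by
  set u : Fin N → ℝ := fun _ => (1:ℝ) with hu
  set q : ℕ → ℝ := fun k => u ⬝ᵥ (M ^ k) *ᵥ u with hq
  have hMt : Mᵀ = M := by
    rw [← Matrix.conjTranspose_eq_transpose_of_trivial]; exact hM.1
  have hMkt : ∀ m : ℕ, (M ^ m)ᵀ = M ^ m := fun m => by rw [Matrix.transpose_pow, hMt]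
  have hq1 : q 1 = u ⬝ᵥ M *ᵥ u := by simp [hq]
  have hqnn : ∀ k, 0 ≤ q k := fun k => psd_dot_nonneg (hM.pow k) u
  have hN0 : (0:ℝ) < N := by exact_mod_cast hN
  -- Cauchy-Schwarz (even)
  have hCS2 : ∀ m : ℕ, q m ^ 2 ≤ (N:ℝ) * q (m + m) := by
    intro m
    set w : Fin N → ℝ := M ^ m *ᵥ u with hw
    have h1 : q m = u ⬝ᵥ w := rfl
    have h2 : q (m + m) = w ⬝ᵥ w := by
      rw [hq]
      show u ⬝ᵥ (M ^ (m + m)) *ᵥ u = w ⬝ᵥ w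
      rw [pow_add, ← Matrix.mulVec_mulVec, ← hw, ← mulVec_dot_symm (hMkt m) u w, ← hw]
    have h3 := Finset.sum_mul_sq_le_sq_mul_sq Finset.univ (fun _ => (1:ℝ)) w
    simp only [one_mul, one_pow, Finset.sum_const, Finset.card_univ, Fintype.card_fin,
      nsmul_eq_mul, mul_one] at h3
    have h4 : u ⬝ᵥ w = ∑ i, w i := by simp [hu, dotProduct]
    have h5 : w ⬝ᵥ w = ∑ i, w i ^ 2 := by simp [dotProduct, sq]
    rw [h1, h2, h4, h5]
    exact h3
  -- Cauchy-Schwarz (odd)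
  have hCSodd : ∀ m : ℕ, q (m + 1) ^ 2 ≤ q 1 * q (m + 1 + m) := by
    intro m
    set w : Fin N → ℝ := M ^ m *ᵥ u with hw
    have h0 := psd_cs hM u w
    have h1 : u ⬝ᵥ M *ᵥ w = q (m + 1) := by
      rw [hw, Matrix.mulVec_mulVec, ← pow_succ']
    have h2 : w ⬝ᵥ M *ᵥ w = q (m + 1 + m) := by
      rw [hw, mulVec_dot_symm (hMkt m) u (M *ᵥ (M ^ m *ᵥ u))]
      simp only [Matrix.mulVec_mulVec]
      have e : M ^ m * (M * M ^ m) = M ^ (m + 1 + m) := by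
        rw [← mul_assoc, ← pow_succ, ← pow_add]
      rw [e]
    rw [h1, ← hq1, h2] at h0
    exact h0
  -- strong induction
  suffices h : ∀ k : ℕ, 1 ≤ k → q 1 ^ k * (N:ℝ) ≤ (N:ℝ) ^ k * q k by
    intro k hk
    have h2 := h k hk
    rw [hq1] at h2
    exact h2
  intro k
  induction k using Nat.strong_induction_on with
  | _ k ih =>
    intro hk
    rcases Nat.even_or_odd k with ⟨m, hm⟩ | ⟨m, hm⟩
    · -- k = m + m, m ≥ 1
      have hm1 : 1 ≤ m := by omega
      subst hm
      have hih := ih m (by omega) hm1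
      have hsq : (q 1 ^ m * (N:ℝ)) ^ 2 ≤ ((N:ℝ) ^ m * q m) ^ 2 :=
        pow_le_pow_left₀ (mul_nonneg (pow_nonneg (hqnn 1) m) hN0.le) hih 2
      have h2 := hCS2 m
      have h3 : ((N:ℝ) ^ m) ^ 2 * q m ^ 2 ≤ ((N:ℝ) ^ m) ^ 2 * ((N:ℝ) * q (m + m)) :=
        mul_le_mul_of_nonneg_left h2 (sq_nonneg _)
      have e1 : q 1 ^ (m + m) = q 1 ^ m * q 1 ^ m := pow_add _ _ _
      have e2 : (N:ℝ) ^ (m + m) = (N:ℝ) ^ m * (N:ℝ) ^ m := pow_add _ _ _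
      apply le_of_mul_le_mul_right _ hN0
      rw [e1, e2]
      nlinarith [hsq, h3]
    · -- k = 2m + 1
      rcases Nat.eq_zero_or_pos m with rfl | hm1
      · subst hm
        norm_num
        exact le_of_eq (mul_comm _ _)
      subst hm
      have hih := ih (m + 1) (by omega) (by omega)
      rcases eq_or_lt_of_le (hqnn 1) with hz | hpos
      · rw [← hz, zero_pow (by omega : 2 * m + 1 ≠ 0), zero_mul]
        exact mul_nonneg (by positivity) (hqnn _)
      · have hodd := hCSodd m
        have hsq : (q 1 ^ (m + 1) * (N:ℝ)) ^ 2 ≤ ((N:ℝ) ^ (m + 1) * q (m + 1)) ^ 2 :=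
          pow_le_pow_left₀ (mul_nonneg (pow_nonneg (hqnn 1) _) hN0.le) hih 2
        have h3 : ((N:ℝ) ^ (m + 1)) ^ 2 * q (m + 1) ^ 2 ≤
            ((N:ℝ) ^ (m + 1)) ^ 2 * (q 1 * q (m + 1 + m)) :=
          mul_le_mul_of_nonneg_left hodd (sq_nonneg _)
        have e0 : m + 1 + m = 2 * m + 1 := by omega
        rw [e0] at h3
        apply le_of_mul_le_mul_right _ (mul_pos hpos hN0)
        have e1 : q 1 ^ (2 * m + 1) * (N:ℝ) * (q 1 * (N:ℝ)) = (q 1 ^ (m + 1)) ^ 2 * (N:ℝ) ^ 2 := by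
          rw [← pow_mul]
          have e : (m + 1) * 2 = 2 * m + 1 + 1 := by omega
          rw [e, pow_succ]
          ring
        have e2 : (N:ℝ) ^ (2 * m + 1) * q (2 * m + 1) * (q 1 * (N:ℝ)) =
            ((N:ℝ) ^ (m + 1)) ^ 2 * (q 1 * q (2 * m + 1)) := by
          rw [← pow_mul]
          have e : (m + 1) * 2 = 2 * m + 1 + 1 := by omega
          rw [e, pow_succ]
          ring
        rw [e1, e2]
        nlinarith [hsq, h3]
lemma trace_lower (hN : 0 < N) {M : Matrix (Fin N) (Fin N) ℝ} (hM : M.PosSemidef)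
    (n : ℕ) (hn : 1 ≤ n) :
    ((fun _ => (1:ℝ)) ⬝ᵥ M *ᵥ (fun _ => (1:ℝ))) ^ n ≤ (N:ℝ) ^ n * (M ^ n).trace := by
  have hN0 : (0:ℝ) < N := by exact_mod_cast hN
  have h1 := key_pow hN hM n hn
  have h2 := psd_sum_le (hM.pow n)
  have h3 := mul_le_mul_of_nonneg_left h2 (pow_nonneg (Nat.cast_nonneg N) n)
  apply le_of_mul_le_mul_right _ hN0
  nlinarith [h1, h3]

section prob
open scoped ENNReal NNReal
open MeasureTheory
variable {Ω : Type*} [MeasureSpace Ω] [IsProbabilityMeasure (ℙ : Measure Ω)]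

/-- membership in all finite `L^p` spaces. -/
def AllLp (f : Ω → ℝ) : Prop := ∀ p : ℝ≥0∞, p ≠ ∞ → MeasureTheory.MemLp f p ℙ

lemma AllLp.integrable {f : Ω → ℝ} (h : AllLp f) : Integrable f ℙ :=
  (h 1 (by norm_num)).integrable le_rfl

lemma AllLp.memℒp2 {f : Ω → ℝ} (h : AllLp f) : MemLp f 2 ℙ := h 2 (by norm_num)

lemma AllLp.const (c : ℝ) : AllLp (fun _ : Ω => c) := fun _ _ => memLp_const c

lemma AllLp.add {f g : Ω → ℝ} (hf : AllLp f) (hg : AllLp g) :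
    AllLp (fun ω => f ω + g ω) := fun p hp => (hf p hp).add (hg p hp)

lemma AllLp.mul {f g : Ω → ℝ} (hf : AllLp f) (hg : AllLp g) :
    AllLp (fun ω => f ω * g ω) := by
  intro p hp
  rcases eq_or_ne p 0 with rfl | hp0
  · rw [MeasureTheory.memLp_zero_iff_aestronglyMeasurable]
    exact (hf 1 (by norm_num)).aestronglyMeasurable.mul
      (hg 1 (by norm_num)).aestronglyMeasurable
  · have h2p : (2:ℝ≥0∞) * p ≠ ∞ := ENNReal.mul_ne_top (by norm_num) hp
    have hf2 := hf (2 * p) h2p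
    have hg2 := hg (2 * p) h2p
    have hcond : 1 / p = 1 / (2 * p) + 1 / (2 * p) := by
      rw [ENNReal.div_add_div_same]
      have : (1:ℝ≥0∞) + 1 = 2 * 1 := by norm_num
      rw [this, ENNReal.mul_div_mul_left _ _ (by norm_num) (by norm_num)]
    have h : MemLp (g • f) p ℙ := hf2.smul (𝕜 := ℝ) hg2 (hpqr := ⟨by simpa only [one_div] using hcond.symm⟩)
    have he : (fun ω => f ω * g ω) = g • f := by
      funext ω; simp [mul_comm]
    rw [he]
    exact h

lemma AllLp.const_mul {f : Ω → ℝ} (hf : AllLp f) (c : ℝ) :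
    AllLp (fun ω => c * f ω) := (AllLp.const c).mul hf

lemma AllLp.sum {ι : Type*} (s : Finset ι) (f : ι → Ω → ℝ) (h : ∀ i ∈ s, AllLp (f i)) :
    AllLp (fun ω => ∑ i ∈ s, f i ω) := fun p hp => by
  have := memLp_finset_sum' (μ := ℙ) s (fun i hi => h i hi p hp)
  have he : (fun ω => ∑ i ∈ s, f i ω) = ∑ i ∈ s, f i := by
    funext ω; simp
  rw [he]
  exact this

lemma AllLp.pow {f : Ω → ℝ} (hf : AllLp f) (n : ℕ) : AllLp (fun ω => f ω ^ n) := by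
  induction n with
  | zero => simpa using AllLp.const 1
  | succ n ih =>
      have := ih.mul hf
      simpa [pow_succ] using this

end prob

lemma psd_smul_nonneg {M : Matrix (Fin N) (Fin N) ℝ} (hM : M.PosSemidef) {c : ℝ} (hc : 0 ≤ c) :
    (c • M).PosSemidef := by
  refine Matrix.PosSemidef.of_dotProduct_mulVec_nonneg ?_ ?_
  · show (c • M)ᴴ = c • M
    rw [Matrix.conjTranspose_smul, star_trivial, hM.1]
  · intro x
    rw [Matrix.smul_mulVec, dotProduct_smul, smul_eq_mul]
    exact mul_nonneg hc (hM.dotProduct_mulVec_nonneg x)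

lemma cube_le_three_sum_sq : ∀ n : ℕ, (n:ℝ)^3 ≤ 3 * ∑ i ∈ Finset.range n, ((i:ℝ)+1)^2 := by
  intro n
  induction n with
  | zero => simp
  | succ n ih =>
    rw [Finset.sum_range_succ]
    push_cast
    nlinarith [ih, Nat.cast_nonneg (α := ℝ) n]

section main
open MeasureTheory ProbabilityTheory
open scoped ENNReal

variable {Ω : Type*} [MeasureSpace Ω] [IsProbabilityMeasure (ℙ : Measure Ω)]

theorem main_aux (N : ℕ) (hN : 1 ≤ N)
    (X : Fin N → Fin N → Ω → ℝ) (ξ : Ω → ℝ)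
    (hzero : ∀ (i j : Fin N), i < j → ∀ ω, X i j ω = 0)
    (hident : ∀ (i j : Fin N), j ≤ i → IdentDistrib (X i j) ξ ℙ ℙ)
    (hmom : ∀ p : ℕ, MemLp ξ p ℙ)
    (μ : ℝ) (hξmean : ∫ ω, ξ ω ∂ℙ = μ) (m : ℕ) :
    (μ ^ 2 / 3) ^ (m + 2) * (N:ℝ) ^ (m + 1) ≤
      ∫ ω, (1 / (N : ℝ)) *
        Matrix.trace (((N : ℝ) • ((XMr N X ω)ᵀ * XMr N X ω)) ^ (m + 2)) ∂ℙ := by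
  have hN0 : (0:ℝ) < N := by exact_mod_cast hN
  have hNne : (N:ℝ) ≠ 0 := ne_of_gt hN0
  -- ξ is in all Lp
  have hξall : AllLp ξ := by
    intro p hp
    refine (hmom ⌈p.toReal⌉₊).mono_exponent ?_
    calc p = ENNReal.ofReal p.toReal := (ENNReal.ofReal_toReal hp).symm
      _ ≤ ENNReal.ofReal (⌈p.toReal⌉₊ : ℝ) := ENNReal.ofReal_le_ofReal (Nat.le_ceil _)
      _ = ((⌈p.toReal⌉₊ : ℕ) : ℝ≥0∞) := ENNReal.ofReal_natCast _
  -- all entries are in all Lp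
  have hXall : ∀ i j : Fin N, AllLp (X i j) := by
    intro i j
    rcases le_or_gt j i with h | h
    · exact fun p hp => ((hident i j h).memLp_iff).2 (hξall p hp)
    · have hz : X i j = fun _ => (0:ℝ) := funext (hzero i j h)
      rw [hz]
      exact AllLp.const 0
  -- entries of the matrix are in all Lp
  have hMent : ∀ i j : Fin N,
      AllLp (fun ω => ((N : ℝ) • ((XMr N X ω)ᵀ * XMr N X ω)) i j) := by
    intro i j
    have he : (fun ω => ((N : ℝ) • ((XMr N X ω)ᵀ * XMr N X ω)) i j)
        = fun ω => (N:ℝ) * ∑ k, ((N:ℝ)⁻¹ * X k i ω) * ((N:ℝ)⁻¹ * X k j ω) := by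
      funext ω
      simp only [XMr, Matrix.smul_apply, smul_eq_mul, Matrix.mul_apply,
        Matrix.transpose_apply, Matrix.of_apply]
    rw [he]
    exact AllLp.const_mul (AllLp.sum _ _ fun k _ =>
      ((hXall k i).const_mul _).mul ((hXall k j).const_mul _)) _
  -- entries of powers are in all Lp
  have hPow : ∀ (mm : ℕ) (i j : Fin N),
      AllLp (fun ω => (((N : ℝ) • ((XMr N X ω)ᵀ * XMr N X ω)) ^ mm) i j) := by
    intro mm
    induction mm with
    | zero =>
      intro i j
      have he : (fun ω => (((N : ℝ) • ((XMr N X ω)ᵀ * XMr N X ω)) ^ 0) i j)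
          = fun _ => (1 : Matrix (Fin N) (Fin N) ℝ) i j := by
        funext ω; rw [pow_zero]
      rw [he]
      exact AllLp.const _
    | succ mm ih =>
      intro i j
      have he : (fun ω => (((N : ℝ) • ((XMr N X ω)ᵀ * XMr N X ω)) ^ (mm + 1)) i j)
          = fun ω => ∑ k, (((N : ℝ) • ((XMr N X ω)ᵀ * XMr N X ω)) ^ mm) i k *
              ((N : ℝ) • ((XMr N X ω)ᵀ * XMr N X ω)) k j := by
        funext ω; rw [pow_succ, Matrix.mul_apply]
      rw [he]
      exact AllLp.sum _ _ fun k _ => (ih i k).mul (hMent k j)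
  -- the integrand is integrable
  have htrace : AllLp (fun ω => (1 / (N : ℝ)) *
      Matrix.trace (((N : ℝ) • ((XMr N X ω)ᵀ * XMr N X ω)) ^ (m + 2))) := by
    have he : (fun ω => (1 / (N : ℝ)) *
        Matrix.trace (((N : ℝ) • ((XMr N X ω)ᵀ * XMr N X ω)) ^ (m + 2)))
        = fun ω => (1 / (N : ℝ)) *
            ∑ i, (((N : ℝ) • ((XMr N X ω)ᵀ * XMr N X ω)) ^ (m + 2)) i i := by
      funext ω; rw [Matrix.trace]; rfl
    rw [he]
    exact AllLp.const_mul (AllLp.sum _ _ fun i _ => hPow (m + 2) i i) _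
  -- row sums
  set S : Fin N → Ω → ℝ := fun k ω => ∑ j, X k j ω with hSdef
  have hS : ∀ k, AllLp (S k) := fun k => AllLp.sum _ _ fun j _ => hXall k j
  set Y : Ω → ℝ := fun ω => (N:ℝ)⁻¹ * ∑ k, (S k ω)^2 with hYdef
  have hY : AllLp Y := AllLp.const_mul (AllLp.sum _ _ fun k _ => (hS k).pow 2) _
  have hYnn : ∀ ω, 0 ≤ Y ω := fun ω => by
    have : 0 ≤ ∑ k, (S k ω)^2 := Finset.sum_nonneg fun k _ => sq_nonneg _
    positivity
  -- the quadratic form at the all-ones vector equals Y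
  have hq1Y : ∀ ω, (fun _ => (1:ℝ)) ⬝ᵥ ((N : ℝ) • ((XMr N X ω)ᵀ * XMr N X ω)) *ᵥ
      (fun _ => (1:ℝ)) = Y ω := by
    intro ω
    have h1 : (fun _ => (1:ℝ)) ⬝ᵥ ((N : ℝ) • ((XMr N X ω)ᵀ * XMr N X ω)) *ᵥ
        (fun _ => (1:ℝ)) = ∑ i, ∑ j, ((N : ℝ) • ((XMr N X ω)ᵀ * XMr N X ω)) i j := by
      simp [dotProduct, Matrix.mulVec]
    have h2 : ∀ i j : Fin N, ((N : ℝ) • ((XMr N X ω)ᵀ * XMr N X ω)) i j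
        = (N:ℝ)⁻¹ * ∑ k, X k i ω * X k j ω := by
      intro i j
      have : ((N : ℝ) • ((XMr N X ω)ᵀ * XMr N X ω)) i j
          = (N:ℝ) * ∑ k, ((N:ℝ)⁻¹ * X k i ω) * ((N:ℝ)⁻¹ * X k j ω) := by
        simp only [XMr, Matrix.smul_apply, smul_eq_mul, Matrix.mul_apply,
          Matrix.transpose_apply, Matrix.of_apply]
      rw [this, Finset.mul_sum, Finset.mul_sum]
      refine Finset.sum_congr rfl fun k _ => ?_
      field_simp
    rw [h1]
    have h3 : ∑ i, ∑ j, ((N : ℝ) • ((XMr N X ω)ᵀ * XMr N X ω)) i j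
        = ∑ i, ∑ j, (N:ℝ)⁻¹ * ∑ k, X k i ω * X k j ω := by
      exact Finset.sum_congr rfl fun i _ => Finset.sum_congr rfl fun j _ => h2 i j
    rw [h3, hYdef]
    simp only [← Finset.mul_sum]
    congr 1
    calc ∑ i, ∑ j, ∑ k, X k i ω * X k j ω
        = ∑ i, ∑ k, ∑ j, X k i ω * X k j ω :=
          Finset.sum_congr rfl fun i _ => Finset.sum_comm
      _ = ∑ k, ∑ i, ∑ j, X k i ω * X k j ω := Finset.sum_comm
      _ = ∑ k, (S k ω)^2 := by
          refine Finset.sum_congr rfl fun k _ => ?_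
          simp only [hSdef]
          rw [sq]
          exact (Finset.sum_mul_sum Finset.univ Finset.univ
            (fun i => X k i ω) (fun j => X k j ω)).symm
  -- mean of entries
  have hEX : ∀ i j : Fin N, ∫ ω, X i j ω ∂ℙ = if j ≤ i then μ else 0 := by
    intro i j
    by_cases h : j ≤ i
    · rw [if_pos h, ← hξmean]
      exact (hident i j h).integral_eq
    · rw [if_neg h]
      have hz : X i j = fun _ => (0:ℝ) := funext (hzero i j (lt_of_not_ge h))
      rw [hz]
      simp
  have hES : ∀ k : Fin N, ∫ ω, S k ω ∂ℙ = (((k:ℕ):ℝ) + 1) * μ := by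
    intro k
    simp only [hSdef]
    rw [integral_finset_sum _ (fun j _ => (hXall k j).integrable)]
    have h1 : ∀ j : Fin N, (∫ ω, X k j ω ∂ℙ) = if (j:ℕ) ≤ (k:ℕ) then μ else 0 := by
      intro j
      rw [hEX k j]
      simp only [Fin.le_def]
    rw [Finset.sum_congr rfl fun j _ => h1 j]
    rw [Fin.sum_univ_eq_sum_range (fun i => if i ≤ (k:ℕ) then μ else 0) N]
    rw [← Finset.sum_filter]
    have hfilt : (Finset.range N).filter (fun i => i ≤ (k:ℕ)) = Finset.range ((k:ℕ) + 1) := by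
      have hk := k.isLt
      ext i
      simp only [Finset.mem_filter, Finset.mem_range, Nat.lt_succ_iff]
      omega
    rw [hfilt, Finset.sum_const, Finset.card_range, nsmul_eq_mul]
    push_cast
    ring
  -- second moments dominate squared means
  have hES2 : ∀ k : Fin N, ((((k:ℕ):ℝ) + 1) * μ)^2 ≤ ∫ ω, (S k ω)^2 ∂ℙ := by
    intro k
    have hvar := variance_nonneg (S k) ℙ
    rw [variance_eq_sub ((hS k).memℒp2)] at hvar
    have hvar2 : 0 ≤ (∫ ω, (S k ω)^2 ∂ℙ) - (∫ ω, S k ω ∂ℙ)^2 := hvar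
    rw [hES k] at hvar2
    linarith
  -- lower bound on E Y
  have hEY : μ^2 * (N:ℝ)^2 / 3 ≤ ∫ ω, Y ω ∂ℙ := by
    have hint : ∀ k : Fin N, Integrable (fun ω => (S k ω)^2) ℙ :=
      fun k => ((hS k).pow 2).integrable
    have h1 : ∫ ω, Y ω ∂ℙ = (N:ℝ)⁻¹ * ∑ k, ∫ ω, (S k ω)^2 ∂ℙ := by
      simp only [hYdef]
      rw [integral_const_mul, integral_finset_sum _ (fun k _ => hint k)]
    rw [h1]
    have h2 : ∑ k : Fin N, ((((k:ℕ):ℝ) + 1) * μ)^2 ≤ ∑ k, ∫ ω, (S k ω)^2 ∂ℙ :=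
      Finset.sum_le_sum fun k _ => hES2 k
    have h3 : ∑ k : Fin N, ((((k:ℕ):ℝ) + 1) * μ)^2
        = μ^2 * ∑ i ∈ Finset.range N, ((i:ℝ)+1)^2 := by
      rw [Finset.mul_sum, ← Fin.sum_univ_eq_sum_range (fun i => μ^2 * (((i:ℝ)+1)^2)) N]
      exact Finset.sum_congr rfl fun k _ => by ring
    have h4 := cube_le_three_sum_sq N
    have h5 : μ^2 * ((N:ℝ)^3/3) ≤ μ^2 * ∑ i ∈ Finset.range N, ((i:ℝ)+1)^2 :=
      mul_le_mul_of_nonneg_left (by linarith) (sq_nonneg μ)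
    calc μ^2 * (N:ℝ)^2/3 = (N:ℝ)⁻¹ * (μ^2 * ((N:ℝ)^3/3)) := by
          field_simp
      _ ≤ (N:ℝ)⁻¹ * (μ^2 * ∑ i ∈ Finset.range N, ((i:ℝ)+1)^2) :=
          mul_le_mul_of_nonneg_left h5 (by positivity)
      _ = (N:ℝ)⁻¹ * (∑ k : Fin N, ((((k:ℕ):ℝ) + 1) * μ)^2) := by rw [h3]
      _ ≤ (N:ℝ)⁻¹ * ∑ k, ∫ ω, (S k ω)^2 ∂ℙ := mul_le_mul_of_nonneg_left h2 (by positivity)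
  -- Jensen's inequality
  have hJ : (∫ ω, Y ω ∂ℙ)^(m+2) ≤ ∫ ω, (Y ω)^(m+2) ∂ℙ := by
    have hg := convexOn_pow (𝕜 := ℝ) (m+2)
    exact hg.map_integral_le (μ := ℙ) ((continuous_pow (m+2)).continuousOn) isClosed_Ici
      (Filter.Eventually.of_forall fun ω => hYnn ω) hY.integrable
      ((hY.pow (m+2)).integrable)
  -- pointwise bound
  have hptw : ∀ ω, ((N:ℝ)^(m+3))⁻¹ * (Y ω)^(m+2) ≤ (1/(N:ℝ)) *
      Matrix.trace (((N : ℝ) • ((XMr N X ω)ᵀ * XMr N X ω)) ^ (m + 2)) := by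
    intro ω
    have hpsd : (((N : ℝ)) • ((XMr N X ω)ᵀ * XMr N X ω)).PosSemidef := by
      apply psd_smul_nonneg _ (Nat.cast_nonneg N)
      rw [← Matrix.conjTranspose_eq_transpose_of_trivial]
      exact Matrix.posSemidef_conjTranspose_mul_self _
    have htl := trace_lower (by omega : 0 < N) hpsd (m+2) (by omega)
    rw [hq1Y ω] at htl
    set T := Matrix.trace ((((N : ℝ)) • ((XMr N X ω)ᵀ * XMr N X ω)) ^ (m + 2)) with hT
    calc ((N:ℝ)^(m+3))⁻¹ * (Y ω)^(m+2)
        ≤ ((N:ℝ)^(m+3))⁻¹ * ((N:ℝ)^(m+2) * T) :=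
          mul_le_mul_of_nonneg_left htl (by positivity)
      _ = (1/(N:ℝ)) * T := by
          rw [← mul_assoc]
          congr 1
          rw [pow_succ]
          field_simp
  -- conclusion
  have hle : ∫ ω, ((N:ℝ)^(m+3))⁻¹ * (Y ω)^(m+2) ∂ℙ ≤
      ∫ ω, (1 / (N : ℝ)) *
        Matrix.trace (((N : ℝ) • ((XMr N X ω)ᵀ * XMr N X ω)) ^ (m + 2)) ∂ℙ :=
    integral_mono_of_nonneg
      (Filter.Eventually.of_forall fun ω =>
        mul_nonneg (by positivity) (pow_nonneg (hYnn ω) _))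
      htrace.integrable (Filter.Eventually.of_forall hptw)
  have heq : (μ^2/3)^(m+2) * (N:ℝ)^(m+1) = ((N:ℝ)^(m+3))⁻¹ * (μ^2 * (N:ℝ)^2 / 3)^(m+2) := by
    rw [div_pow, div_pow, mul_pow, ← pow_mul]
    field_simp
    ring
  calc (μ^2/3)^(m+2) * (N:ℝ)^(m+1)
      = ((N:ℝ)^(m+3))⁻¹ * (μ^2 * (N:ℝ)^2 / 3)^(m+2) := heq
    _ ≤ ((N:ℝ)^(m+3))⁻¹ * (∫ ω, Y ω ∂ℙ)^(m+2) :=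
        mul_le_mul_of_nonneg_left (pow_le_pow_left₀ (by positivity) hEY _) (by positivity)
    _ ≤ ((N:ℝ)^(m+3))⁻¹ * ∫ ω, (Y ω)^(m+2) ∂ℙ :=
        mul_le_mul_of_nonneg_left hJ (by positivity)
    _ = ∫ ω, ((N:ℝ)^(m+3))⁻¹ * (Y ω)^(m+2) ∂ℙ := (integral_const_mul _ _).symm
    _ ≤ _ := hle


end main


end detAux

/-- **Lemma 4.5 of the paper.** If the lower-triangular entries `X_{i,j}^N` are
i.i.d. with a common distribution not depending on `N`, having finite moments of
all orders and nonzero mean `μ`, then for every `n ≥ 2`,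
`E[tr((N X_N^* X_N)^n)] → ∞`, where `tr = (1/N)·Tr`. -/
theorem expected_normalized_trace_tendsto_atTop
    {Ω : Type*} [MeasureSpace Ω] [IsProbabilityMeasure (ℙ : Measure Ω)]
    (X : (N : ℕ) → Fin N → Fin N → Ω → ℝ)
    (ξ : Ω → ℝ) (hξmeas : Measurable ξ)
    (hmeas : ∀ N (i j : Fin N), Measurable (X N i j))
    (hzero : ∀ N (i j : Fin N), i < j → ∀ ω, X N i j ω = 0)
    (hindep : ∀ N, iIndepFun
      (fun p : LTri N => X N p.1.1 p.1.2) ℙ)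
    (hident : ∀ N (i j : Fin N), j ≤ i → IdentDistrib (X N i j) ξ ℙ ℙ)
    (hmom : ∀ p : ℕ, MemLp ξ p ℙ)
    (μ : ℝ) (hξmean : ∫ ω, ξ ω ∂ℙ = μ) (hμ : μ ≠ 0) :
    ∀ n : ℕ, 2 ≤ n →
      Tendsto
        (fun N : ℕ => ∫ ω, (1 / (N : ℝ)) *
          Matrix.trace (((N : ℝ) • ((XMr N (X N) ω)ᵀ * XMr N (X N) ω)) ^ n) ∂ℙ)
        atTop atTop := by
  intro n hn
  obtain ⟨m, rfl⟩ : ∃ m, n = m + 2 := ⟨n - 2, by omega⟩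
  have hμ2 : 0 < μ ^ 2 := lt_of_le_of_ne (sq_nonneg μ) (Ne.symm (pow_ne_zero 2 hμ))
  have hc : 0 < (μ ^ 2 / 3 : ℝ) ^ (m + 2) := pow_pos (div_pos hμ2 (by norm_num)) _
  refine tendsto_atTop_mono' atTop
    (f₁ := fun N : ℕ => (μ ^ 2 / 3) ^ (m + 2) * ((N:ℝ)) ^ (m + 1)) ?_ ?_
  · filter_upwards [eventually_ge_atTop 1] with N hN
    exact main_aux N hN (X N) ξ (hzero N) (hident N) hmom μ hξmean m
  · exact Tendsto.const_mul_atTop hc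
      ((tendsto_pow_atTop (by omega : m + 1 ≠ 0)).comp tendsto_natCast_atTop_atTop)


end
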